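/- Let D : ℤ[T, T^{-1}] → ℤ[T, T^{-1}] be the ℤ-linear endomorphism of the ring of Laurent polynomials over ℤ determined by D(T^n) = n·T^{n-1} for all n ∈ ℤ. Then the cokernel of D is isomorphic, as an abelian group (equivalently, as a ℤ-module), to ℤ ⊕ ⨁_{n ∈ ℤ, n ≠ -1} ℤ/(n+1)ℤ. -/

import Mathlib

open DirectSum

namespace CokerDeRham

abbrev Tgt : Type := ℤ × ⨁ (n : {m : ℤ // m ≠ -1}), ℤ ⧸ AddSubgroup.zmultiples ((n : ℤ) + 1)

noncomputable def φ (m : ℤ) : ℤ →+ Tgt :=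
  if h : m = -1 then AddMonoidHom.inl ℤ _
  else (AddMonoidHom.inr _ _).comp
    ((DirectSum.of (fun n : {m : ℤ // m ≠ -1} => ℤ ⧸ AddSubgroup.zmultiples ((n : ℤ) + 1))
        ⟨m, h⟩).comp (QuotientAddGroup.mk' (AddSubgroup.zmultiples (m + 1))))

noncomputable def π : (ℤ →₀ ℤ) →+ Tgt := Finsupp.liftAddHom φ

lemma π_single (m c : ℤ) : π (Finsupp.single m c) = φ m c := by
  simp only [π, Finsupp.liftAddHom_apply_single]

lemma φ_neg_one (c : ℤ) : φ (-1) c = (c, 0) := by simp [φ]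

lemma φ_ne (m : ℤ) (h : m ≠ -1) (c : ℤ) :
    φ m c = (0, DirectSum.of (fun n : {m : ℤ // m ≠ -1} => ℤ ⧸ AddSubgroup.zmultiples ((n : ℤ) + 1))
      ⟨m, h⟩ (QuotientAddGroup.mk c)) := by
  simp [φ, h]

lemma π_surjective : Function.Surjective π := by
  have h1 : ∀ a : ℤ, ∃ f, π f = ((a, 0) : Tgt) := fun a =>
    ⟨Finsupp.single (-1) a, by rw [π_single, φ_neg_one]⟩
  have h2 : ∀ x, ∃ f, π f = ((0, x) : Tgt) := by
    intro x
    induction x using DirectSum.induction_on with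
    | zero => exact ⟨0, map_zero _⟩
    | of i y =>
      obtain ⟨m, hm⟩ := i
      obtain ⟨k, rfl⟩ := QuotientAddGroup.mk'_surjective (AddSubgroup.zmultiples (m + 1)) y
      exact ⟨Finsupp.single m k, by rw [π_single, φ_ne m hm]; rfl⟩
    | add x y hx hy =>
      obtain ⟨f, hf⟩ := hx
      obtain ⟨g, hg⟩ := hy
      exact ⟨f + g, by rw [map_add, hf, hg]; simp⟩
  rintro ⟨a, x⟩
  obtain ⟨f, hf⟩ := h1 a
  obtain ⟨g, hg⟩ := h2 x
  exact ⟨f + g, by rw [map_add, hf, hg]; simp⟩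

noncomputable def ev (i : {m : ℤ // m ≠ -1}) :
    (⨁ n : {m : ℤ // m ≠ -1}, ℤ ⧸ AddSubgroup.zmultiples ((n : ℤ) + 1)) →+
      ℤ ⧸ AddSubgroup.zmultiples ((i : ℤ) + 1) :=
  AddMonoidHom.mk' (fun x => x i) (fun x y => DFinsupp.add_apply x y i)

lemma π_fst (f : ℤ →₀ ℤ) : (π f).1 = f (-1) := by
  have h : (AddMonoidHom.fst ℤ _).comp π = Finsupp.applyAddHom (-1 : ℤ) := by
    apply Finsupp.addHom_ext
    intro m c
    by_cases hm : m = -1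
    · subst hm
      simp only [AddMonoidHom.coe_comp, Function.comp_apply, π_single, φ_neg_one,
        Finsupp.applyAddHom_apply, AddMonoidHom.coe_fst, Finsupp.single_eq_same]
    · simp only [AddMonoidHom.coe_comp, Function.comp_apply, π_single, φ_ne m hm,
        Finsupp.applyAddHom_apply, AddMonoidHom.coe_fst,
        Finsupp.single_eq_of_ne' (fun h => hm h)]
  exact DFunLike.congr_fun h f

lemma π_snd (f : ℤ →₀ ℤ) (i : {m : ℤ // m ≠ -1}) :
    (π f).2 i = QuotientAddGroup.mk (f i) := by
  have h : (ev i).comp ((AddMonoidHom.snd ℤ _).comp π) =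
      (QuotientAddGroup.mk' (AddSubgroup.zmultiples ((i : ℤ) + 1))).comp
        (Finsupp.applyAddHom (i : ℤ)) := by
    apply Finsupp.addHom_ext
    intro m c
    by_cases hm : m = -1
    · subst hm
      have : ((-1 : ℤ)) ≠ (i : ℤ) := fun h => i.2 h.symm
      simp only [AddMonoidHom.coe_comp, Function.comp_apply, π_single, φ_neg_one,
        Finsupp.applyAddHom_apply, AddMonoidHom.coe_snd, ev, AddMonoidHom.mk'_apply,
        Finsupp.single_eq_of_ne' this, DFinsupp.zero_apply, QuotientAddGroup.mk'_apply,
        QuotientAddGroup.mk_zero]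
    · by_cases him : (⟨m, hm⟩ : {m : ℤ // m ≠ -1}) = i
      · subst him
        simp only [AddMonoidHom.coe_comp, Function.comp_apply, π_single, φ_ne m hm,
          Finsupp.applyAddHom_apply, AddMonoidHom.coe_snd, ev, AddMonoidHom.mk'_apply,
          DirectSum.of_eq_same, Finsupp.single_eq_same, QuotientAddGroup.mk'_apply]
      · have hmi : m ≠ (i : ℤ) := fun h => him (Subtype.ext h)
        simp only [AddMonoidHom.coe_comp, Function.comp_apply, π_single, φ_ne m hm,
          Finsupp.applyAddHom_apply, AddMonoidHom.coe_snd, ev, AddMonoidHom.mk'_apply,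
          DirectSum.of_eq_of_ne _ _ _ (Ne.symm him), Finsupp.single_eq_of_ne' hmi,
          QuotientAddGroup.mk'_apply, QuotientAddGroup.mk_zero]
  exact DFunLike.congr_fun h f

lemma π_eq_zero_iff (f : ℤ →₀ ℤ) : π f = 0 ↔ ∀ m : ℤ, (m + 1) ∣ f m := by
  constructor
  · intro hf m
    by_cases hm : m = -1
    · subst hm
      have := π_fst f
      rw [hf] at this
      simp at this
      simp [← this]
    · have := π_snd f ⟨m, hm⟩
      rw [hf] at this
      have h0 : QuotientAddGroup.mk (f m) =
          (0 : ℤ ⧸ AddSubgroup.zmultiples (m + 1)) := by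
        rw [← this]; rfl
      rw [QuotientAddGroup.eq_zero_iff] at h0
      exact Int.mem_zmultiples_iff.mp h0
  · intro hf
    have : π f = Finsupp.sum f fun m c => φ m c := by
      simp [π, Finsupp.liftAddHom_apply]
    rw [this, Finsupp.sum]
    apply Finset.sum_eq_zero
    intro m _
    by_cases hm : m = -1
    · subst hm
      have : f (-1) = 0 := by simpa using hf (-1)
      simp [this]
    · rw [φ_ne m hm]
      have : QuotientAddGroup.mk (f m) =
          (0 : ℤ ⧸ AddSubgroup.zmultiples (m + 1)) := by
        rw [QuotientAddGroup.eq_zero_iff]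
        exact Int.mem_zmultiples_iff.mpr (hf m)
      rw [this, map_zero]
      rfl

lemma hsingle (m c : ℤ) :
    (AddMonoidAlgebra.single m c : LaurentPolynomial ℤ) = c • LaurentPolynomial.T m := by
  rw [LaurentPolynomial.T]
  rw [AddMonoidAlgebra.smul_single', mul_one]

noncomputable def π' : LaurentPolynomial ℤ →ₗ[ℤ] Tgt where
  toFun := fun x => π x.coeff
  map_add' := fun x y => map_add π x.coeff y.coeff
  map_smul' := fun c x => by
    have hx := Int.cast_smul_eq_zsmul ℤ c x.coeff
    have hy := Int.cast_smul_eq_zsmul ℤ c (π x.coeff)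
    rw [Int.cast_id] at hx hy
    show π (c • x).coeff = c • π x.coeff
    rw [AddMonoidAlgebra.coeff_smul, hx, hy, map_zsmul]

end CokerDeRham

open CokerDeRham

/-- Let `D` be the ℤ-linear endomorphism of the ring of Laurent polynomials
`ℤ[T,T⁻¹]` determined by `D(Tⁿ) = n·Tⁿ⁻¹` for all `n ∈ ℤ` (the algebraic de Rham differential
of `𝔾ₘ` over `ℤ`, in the basis `dT`). Then the cokernel of `D` is isomorphic as an abelian
group to `ℤ ⊕ ⨁_{n ∈ ℤ, n ≠ -1} ℤ/(n+1)ℤ`. -/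
theorem coker_deRham_Gm
    (D : LaurentPolynomial ℤ →ₗ[ℤ] LaurentPolynomial ℤ)
    (hD : ∀ n : ℤ, D (LaurentPolynomial.T n) = n • LaurentPolynomial.T (n - 1)) :
    Nonempty ((LaurentPolynomial ℤ ⧸ LinearMap.range D) ≃+
      (ℤ × ⨁ (n : {m : ℤ // m ≠ -1}), ℤ ⧸ AddSubgroup.zmultiples ((n : ℤ) + 1))) := by

  have hDsingle : ∀ m c : ℤ, D (AddMonoidAlgebra.single m c) = AddMonoidAlgebra.single (m - 1) (c * m) := by
    intro m c
    rw [hsingle m c, map_smul, hD, smul_smul, hsingle (m - 1) (c * m)]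
  have hker : LinearMap.range D = LinearMap.ker π' := by
    apply le_antisymm
    · rintro _ ⟨f, rfl⟩
      have hcomp : π.comp ((AddMonoidAlgebra.coeffAddEquiv.toAddMonoidHom).comp
            (D.toAddMonoidHom.comp AddMonoidAlgebra.coeffAddEquiv.symm.toAddMonoidHom)) = 0 := by
        apply Finsupp.addHom_ext
        intro m c
        show π (D (AddMonoidAlgebra.single m c)).coeff = 0
        rw [hDsingle m c, AddMonoidAlgebra.coeff_single, π_single]
        by_cases hm : m = 0
        · subst hm; simp
        · have h1 : m - 1 ≠ -1 := fun h => hm (by omega)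
          rw [φ_ne _ h1]
          have : QuotientAddGroup.mk (c * m) =
              (0 : ℤ ⧸ AddSubgroup.zmultiples (m - 1 + 1)) := by
            rw [QuotientAddGroup.eq_zero_iff, Int.mem_zmultiples_iff]
            exact ⟨c, by ring⟩
          rw [this, map_zero]
          rfl
      show π (D f).coeff = 0
      calc π (D f).coeff = (π.comp ((AddMonoidAlgebra.coeffAddEquiv.toAddMonoidHom).comp
            (D.toAddMonoidHom.comp AddMonoidAlgebra.coeffAddEquiv.symm.toAddMonoidHom))) f.coeff := rfl
        _ = 0 := by rw [hcomp]; rfl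
    · intro f hf
      have hdvd : ∀ m : ℤ, (m + 1) ∣ f.coeff m := (π_eq_zero_iff f.coeff).mp hf
      rw [← AddMonoidAlgebra.sum_coeff_single f, Finsupp.sum]
      apply Submodule.sum_mem
      intro m _
      obtain ⟨k, hk⟩ := hdvd m
      refine ⟨k • LaurentPolynomial.T (m + 1), ?_⟩
      rw [map_smul, hD, smul_smul, ← hsingle]
      rw [show m + 1 - 1 = m from by ring, hk]
      rw [mul_comm]
  have hsurj : Function.Surjective π' := fun y => by
    obtain ⟨f, hf⟩ := π_surjective y
    exact ⟨AddMonoidAlgebra.ofCoeff f, hf⟩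
  exact ⟨((Submodule.quotEquivOfEq _ _ hker).trans
    (LinearMap.quotKerEquivOfSurjective π' hsurj)).toAddEquiv⟩
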